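/- Let k and q be natural numbers with q > k ≥ 1, set λ_0 := 2·(q^q/((q-k)^{q-k} · k^k))^{1/k} + 1. Then for every real λ > λ_0 there exist k ORC strategies t^{(1)}, …, t^{(k)} (sequences of reals ≥ 1) such that every x ≥ 1 is λ-covered in at least q rounds, counted with multiplicity over all robots and rounds. -/

import Mathlib

set_option maxHeartbeats 1000000 in
/-- Upper bound in the ORC setting: for every `λ` strictly larger than
`λ₀ = 2 (q^q/((q-k)^(q-k) k^k))^(1/k) + 1` there exist `k` ORC strategies
producing a `q`-fold `λ`-cover of `[1,∞)`. -/
theorem orc_cover_upper_bound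
    (k q : ℕ) (hk : 1 ≤ k) (hkq : k < q)
    (lam : ℝ)
    (hlam : 2 * ((q : ℝ) ^ q / (((q - k : ℕ) : ℝ) ^ (q - k) * (k : ℝ) ^ k)) ^ ((1 : ℝ) / k)
        + 1 < lam) :
    ∃ t : Fin k → ℕ → ℝ,
      (∀ r i, 1 ≤ t r i) ∧
      ∀ x : ℝ, 1 ≤ x →
        q ≤ {p : Fin k × ℕ | x ≤ t p.1 p.2 ∧
              (∑ j ∈ Finset.range p.2, t p.1 j) ≤ ((lam - 1) / 2) * x}.ncard := by
  classical
  set d : ℕ := q - k with hd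
  have hd1 : 1 ≤ d := by omega
  have hkd : k + d = q := by omega
  have hk0 : (0:ℝ) < k := by exact_mod_cast hk
  have hd0 : (0:ℝ) < d := by exact_mod_cast hd1
  have hq0 : (0:ℝ) < q := by exact_mod_cast (show 0 < q by omega)
  have hdq : (d:ℝ) < q := by exact_mod_cast (by omega : d < q)
  set b : ℝ := (q:ℝ) / d with hbdef
  have hb1 : 1 < b := (one_lt_div hd0).mpr hdq
  have hb0 : (0:ℝ) < b := lt_trans one_pos hb1
  set α : ℝ := b ^ ((1:ℝ)/k) with hαdef
  have hα1 : 1 < α := by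
    rw [hαdef]
    rw [Real.one_lt_rpow_iff_of_pos hb0]
    exact Or.inl ⟨hb1, by positivity⟩
  have hα0 : (0:ℝ) < α := lt_trans one_pos hα1
  have hαk : α ^ k = b := by
    rw [hαdef, ← Real.rpow_natCast (b ^ ((1:ℝ)/k)) k, ← Real.rpow_mul hb0.le]
    rw [one_div_mul_cancel (by exact_mod_cast hk0.ne' : (k:ℝ) ≠ 0), Real.rpow_one]
  have hαk1 : α ^ k - 1 = (k:ℝ) / d := by
    rw [hαk, hbdef]
    have : (q:ℝ) = k + d := by exact_mod_cast hkd.symm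
    rw [this]; field_simp; ring
  -- the key quantity
  set X : ℝ := (q : ℝ) ^ q / ((d : ℝ) ^ d * (k : ℝ) ^ k) with hXdef
  have hX0 : (0:ℝ) ≤ X := by positivity
  set B : ℝ := X ^ ((1:ℝ)/k) with hBdef
  have hB0 : (0:ℝ) ≤ B := Real.rpow_nonneg hX0 _
  have hBlt : B < (lam - 1) / 2 := by
    rw [hBdef, hXdef]; linarith [hlam]
  have hkey : α ^ q * ((d:ℝ)/k) = B := by
    have hne : k ≠ 0 := by omega
    have h1 : (α ^ q * ((d:ℝ)/k)) ^ k = B ^ k := by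
      have hBk : B ^ k = X := by
        rw [hBdef, ← Real.rpow_natCast (X ^ ((1:ℝ)/k)) k, ← Real.rpow_mul hX0,
          one_div_mul_cancel (by exact_mod_cast hk0.ne' : (k:ℝ) ≠ 0), Real.rpow_one]
      have h2 : (α ^ q * ((d:ℝ)/k)) ^ k = (α ^ k) ^ q * ((d:ℝ)/k) ^ k := by
        rw [mul_pow, ← pow_mul, ← pow_mul, Nat.mul_comm]
      rw [h2, hαk, hBk, hbdef, hXdef, div_pow, div_pow]
      have hdq' : (d:ℝ) ^ q = (d:ℝ) ^ k * (d:ℝ) ^ d := by rw [← pow_add, hkd]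
      rw [hdq']
      field_simp
    have hmono : StrictMonoOn (fun y : ℝ => y ^ k) {y : ℝ | 0 ≤ y} :=
      pow_left_strictMonoOn₀ hne
    exact hmono.injOn (by positivity : (0:ℝ) ≤ α ^ q * ((d:ℝ)/k)) hB0 h1
  have hBbound : α ^ q * ((d:ℝ)/k) < (lam - 1) / 2 := by rw [hkey]; exact hBlt
  -- the strategies
  refine ⟨fun r i => α ^ (k * i + (r:ℕ)), fun r i => one_le_pow₀ hα1.le, ?_⟩
  intro x hx
  show q ≤ {p : Fin k × ℕ | x ≤ α ^ (k * p.2 + (p.1:ℕ)) ∧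
      (∑ j ∈ Finset.range p.2, α ^ (k * j + (p.1:ℕ))) ≤ ((lam - 1) / 2) * x}.ncard
  have hx0 : (0:ℝ) < x := lt_of_lt_of_le one_pos hx
  set μ : ℝ := (lam - 1) / 2 with hμdef
  have hμ0 : 0 < μ := lt_of_le_of_lt hB0 hBlt
  -- minimal m with x ≤ α ^ m
  obtain ⟨m, hm, hm'⟩ : ∃ m : ℕ, x ≤ α ^ m ∧ α ^ m ≤ α * x := by
    have hex : ∃ n, x ≤ α ^ n := by
      obtain ⟨n, hn⟩ := pow_unbounded_of_one_lt x hα1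
      exact ⟨n, hn.le⟩
    refine ⟨Nat.find hex, Nat.find_spec hex, ?_⟩
    rcases Nat.eq_zero_or_pos (Nat.find hex) with h0 | h0
    · rw [h0, pow_zero]; nlinarith
    · have h1 : α ^ (Nat.find hex - 1) < x := by
        have := Nat.find_min hex (show Nat.find hex - 1 < Nat.find hex by omega)
        push_neg at this; exact this
      have h2 : α ^ Nat.find hex = α * α ^ (Nat.find hex - 1) := by
        conv_lhs => rw [show Nat.find hex = (Nat.find hex - 1) + 1 by omega]
        rw [pow_succ']
      rw [h2]
      nlinarith
  -- the injection
  set f : ℕ → Fin k × ℕ := fun n => (⟨n % k, Nat.mod_lt n hk⟩, n / k) with hfdef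
  have hf_inj : Function.Injective f := by
    intro a c h
    have h1 : a % k = c % k := congrArg (fun p => (p.1 : ℕ)) h
    have h2 : a / k = c / k := congrArg Prod.snd h
    calc a = k * (a / k) + a % k := (Nat.div_add_mod a k).symm
    _ = k * (c / k) + c % k := by rw [h1, h2]
    _ = c := Nat.div_add_mod c k
  set S : Set (Fin k × ℕ) := {p : Fin k × ℕ | x ≤ α ^ (k * p.2 + (p.1:ℕ)) ∧
      (∑ j ∈ Finset.range p.2, α ^ (k * j + (p.1:ℕ))) ≤ μ * x} with hSdef
  set F : Finset (Fin k × ℕ) := (Finset.range q).image (fun j => f (m + j)) with hFdef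
  have hFcard : F.card = q := by
    have hinj : Function.Injective (fun j => f (m + j)) := by
      intro a c h
      have := hf_inj h
      omega
    rw [hFdef, Finset.card_image_of_injective _ hinj, Finset.card_range]
  -- membership of each f (m+j) in S
  have hFsub : (F : Set (Fin k × ℕ)) ⊆ S := by
    intro p hp
    simp only [hFdef, Finset.coe_image, Finset.coe_range, Set.mem_image, Set.mem_Iio] at hp
    obtain ⟨j, hj, rfl⟩ := hp
    set n : ℕ := m + j with hndef
    have hn : k * (n / k) + n % k = n := Nat.div_add_mod n k
    have hαn_ge : x ≤ α ^ n := hm.trans (pow_le_pow_right₀ hα1.le (by omega))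
    have hαn_le : α ^ n ≤ α ^ q * x := by
      have h1 : α ^ n ≤ α ^ (m + (q - 1)) := pow_le_pow_right₀ hα1.le (by omega)
      have h2 : α ^ (m + (q - 1)) = α ^ m * α ^ (q - 1) := pow_add α m (q - 1)
      have h3 : α ^ m * α ^ (q - 1) ≤ (α * x) * α ^ (q - 1) :=
        mul_le_mul_of_nonneg_right hm' (by positivity)
      have hq' : α ^ ((q - 1) + 1) = α * α ^ (q - 1) := pow_succ' α (q - 1)
      rw [show (q - 1) + 1 = q from by omega] at hq'
      have h4 : (α * x) * α ^ (q - 1) = α ^ q * x := by rw [hq']; ring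
      calc α ^ n ≤ α ^ m * α ^ (q - 1) := h1.trans_eq h2
      _ ≤ (α * x) * α ^ (q - 1) := h3
      _ = α ^ q * x := h4
    constructor
    · show x ≤ α ^ (k * (n / k) + ((⟨n % k, _⟩ : Fin k) : ℕ))
      simpa [hn] using hαn_ge
    · show (∑ j' ∈ Finset.range (n / k), α ^ (k * j' + n % k)) ≤ μ * x
      set i : ℕ := n / k with hidef
      set r : ℕ := n % k with hrdef
      have hsum_eq : (∑ j' ∈ Finset.range i, α ^ (k * j' + r))
          = ((α ^ k) ^ i - 1) / (α ^ k - 1) * α ^ r := by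
        have : ∀ j', α ^ (k * j' + r) = (α ^ k) ^ j' * α ^ r := by
          intro j'; rw [pow_add, pow_mul]
        simp_rw [this, ← Finset.sum_mul]
        congr 1
        exact geom_sum_eq (by rw [hαk]; exact hb1.ne') i
      have hA : (α ^ k) ^ i * α ^ r = α ^ n := by
        rw [← pow_mul, ← pow_add, hn]
      have hdk0 : (0:ℝ) < (k:ℝ) / d := by positivity
      have hsum_le : (∑ j' ∈ Finset.range i, α ^ (k * j' + r)) ≤ α ^ n * ((d:ℝ)/k) := by
        rw [hsum_eq, hαk1, div_eq_mul_inv _ ((k:ℝ)/d), inv_div]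
        have hαr : (0:ℝ) < α ^ r := by positivity
        have hdk : (0:ℝ) < (d:ℝ) / k := by positivity
        nlinarith [hA, mul_pos hdk hαr]
      have hfinal : α ^ n * ((d:ℝ)/k) ≤ (α ^ q * x) * ((d:ℝ)/k) :=
        mul_le_mul_of_nonneg_right hαn_le (by positivity)
      have : (α ^ q * x) * ((d:ℝ)/k) ≤ μ * x := by nlinarith [hBbound, hx0]
      linarith [hsum_le, hfinal, this]
  -- finiteness of S
  have hSfin : S.Finite := by
    apply Set.Finite.subset (Set.finite_univ.prod (Set.finite_Iic ⌊μ * x⌋₊))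
    intro p hp
    obtain ⟨-, hp2⟩ := hp
    refine ⟨Set.mem_univ _, ?_⟩
    have hcard : (p.2 : ℝ) ≤ ∑ j ∈ Finset.range p.2, α ^ (k * j + (p.1:ℕ)) := by
      calc (p.2 : ℝ) = ∑ j ∈ Finset.range p.2, (1:ℝ) := by simp
      _ ≤ _ := Finset.sum_le_sum fun j _ => one_le_pow₀ hα1.le
    have : (p.2 : ℝ) ≤ μ * x := hcard.trans hp2
    exact Nat.le_floor this
  calc (q : ℕ) = F.card := hFcard.symm
  _ = (F : Set (Fin k × ℕ)).ncard := (Set.ncard_coe_finset F).symm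
  _ ≤ S.ncard := Set.ncard_le_ncard hFsub hSfin
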